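/- arXiv:1912.04330 — 6 statements merged into one kernel-verified Lean document; each statement's English description precedes it below -/
import Mathlib

section
/- Let F be a number field and let S denote the (finite) set of real embeddings of F, i.e., ring homomorphisms F → ℝ. Then for any natural numbers k and l with k + l = |S|, there exists a primitive element u of F (i.e., u ∈ F with ℚ(u) = F) such that exactly k of the embeddings σ ∈ S satisfy σ(u) > 0 and exactly l of the embeddings σ ∈ S satisfy σ(u) < 0. -/
open Finset in
/-- For any finite set of reals and `l ≤` its size, there is a rational `q`
with exactly `l` elements below `q` and no element equal to `q`. -/
lemma key_cut (T : Finset ℝ) : ∀ l : ℕ, l ≤ T.card →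
    ∃ q : ℚ, (T.filter (fun x => x < (q : ℝ))).card = l ∧ ∀ x ∈ T, x ≠ (q : ℝ) := by
  intro l
  induction l with
  | zero =>
    intro _
    obtain ⟨q, hq⟩ : ∃ q : ℚ, ∀ x ∈ T, (q : ℝ) < x := by
      rcases T.eq_empty_or_nonempty with h | h
      · exact ⟨0, by simp [h]⟩
      · obtain ⟨q, hq⟩ := exists_rat_lt (T.min' h)
        exact ⟨q, fun x hx => hq.trans_le (T.min'_le x hx)⟩
    refine ⟨q, ?_, fun x hx => (hq x hx).ne'⟩
    rw [Finset.card_eq_zero, Finset.filter_eq_empty_iff]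
    exact fun {x} hx => not_lt.2 (hq x hx).le
  | succ l ih =>
    intro hl
    obtain ⟨q, hq1, hq2⟩ := ih (Nat.le_of_succ_le hl)
    set A := T.filter (fun x => (q : ℝ) < x) with hA
    have hcardA : (T.filter (fun x => x < (q : ℝ))).card + A.card = T.card := by
      rw [hA]
      rw [show (T.filter fun x => (q : ℝ) < x) =
          (T.filter fun x => ¬ x < (q : ℝ)) from Finset.filter_congr
          (fun x hx => by
            constructor
            · exact fun h => not_lt.2 h.le
            · exact fun h => lt_of_le_of_ne (not_lt.1 h) (Ne.symm (hq2 x hx)))]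
      exact Finset.card_filter_add_card_filter_not _
    have hAne : A.Nonempty := by
      rw [← Finset.card_pos]; omega
    set m := A.min' hAne with hm
    have hmA : m ∈ A := A.min'_mem hAne
    have hqm : (q : ℝ) < m := (Finset.mem_filter.1 hmA).2
    have hmT : m ∈ T := (Finset.mem_filter.1 hmA).1
    obtain ⟨q', hq'1, hq'2⟩ : ∃ q' : ℚ, m < (q' : ℝ) ∧ ∀ x ∈ A.erase m, (q' : ℝ) < x := by
      rcases (A.erase m).eq_empty_or_nonempty with h | h
      · obtain ⟨q', hq'⟩ := exists_rat_gt m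
        exact ⟨q', hq', by simp [h]⟩
      · have hmm : m < (A.erase m).min' h := by
          have h1 := A.min'_le _ (Finset.mem_of_mem_erase ((A.erase m).min'_mem h))
          have h2 : (A.erase m).min' h ≠ m := Finset.ne_of_mem_erase ((A.erase m).min'_mem h)
          exact lt_of_le_of_ne h1 (Ne.symm h2)
        obtain ⟨q', hq'a, hq'b⟩ := exists_rat_btwn hmm
        exact ⟨q', hq'a, fun x hx => hq'b.trans_le ((A.erase m).min'_le x hx)⟩
    have hqq' : (q : ℝ) < q' := hqm.trans hq'1
    have key : T.filter (fun x => x < (q' : ℝ)) = insert m (T.filter (fun x => x < (q : ℝ))) := by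
      ext x
      simp only [Finset.mem_filter, Finset.mem_insert]
      constructor
      · rintro ⟨hxT, hxq'⟩
        rcases lt_trichotomy x (q : ℝ) with h | h | h
        · exact Or.inr ⟨hxT, h⟩
        · exact absurd h (hq2 x hxT)
        · have hxA : x ∈ A := Finset.mem_filter.2 ⟨hxT, h⟩
          left
          by_contra hne
          exact absurd hxq' (not_lt.2 (hq'2 x (Finset.mem_erase.2 ⟨hne, hxA⟩)).le)
      · rintro (rfl | ⟨hxT, hxq⟩)
        · exact ⟨hmT, hq'1⟩
        · exact ⟨hxT, hxq.trans hqq'⟩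
    refine ⟨q', ?_, ?_⟩
    · have hmnot : m ∉ T.filter (fun x => x < (q : ℝ)) :=
        fun h => absurd (Finset.mem_filter.1 h).2 (not_lt.2 hqm.le)
      rw [key, Finset.card_insert_of_notMem hmnot, hq1]
    · intro x hx
      rcases lt_trichotomy x (q : ℝ) with h | h | h
      · exact (h.trans hqq').ne
      · exact absurd h (hq2 x hx)
      · have hxA : x ∈ A := Finset.mem_filter.2 ⟨hx, h⟩
        by_cases hxm : x = m
        · exact hxm ▸ hq'1.ne
        · exact (hq'2 x (Finset.mem_erase.2 ⟨hxm, hxA⟩)).ne'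

/-- For a number field `F` with set `S` of real embeddings, and any `k + l = |S|`,
there is a primitive element `u` of `F` with exactly `k` embeddings positive on `u`
and exactly `l` embeddings negative on `u`. -/
theorem stmt_0 (F : Type*) [Field F] [NumberField F]
    (k l : ℕ) (hkl : k + l = Nat.card (F →+* ℝ)) :
    ∃ u : F, IntermediateField.adjoin ℚ {u} = ⊤ ∧
      Nat.card {σ : F →+* ℝ // 0 < σ u} = k ∧
      Nat.card {σ : F →+* ℝ // σ u < 0} = l := by
  classical
  obtain ⟨θ, hθ⟩ := Field.exists_primitive_element ℚ F
  have hint : IsIntegral ℚ θ := IsIntegral.of_finite ℚ θ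
  have hadj : Algebra.adjoin ℚ {θ} = ⊤ := by
    have := IntermediateField.adjoin_simple_toSubalgebra_of_isAlgebraic hint.isAlgebraic
    rw [hθ] at this
    rw [← this]; rfl
  have hinj : Function.Injective (fun σ : F →+* ℝ => σ θ) := by
    intro σ τ h
    have := AlgHom.ext_of_adjoin_eq_top (R := ℚ) hadj
      (φ₁ := RingHom.equivRatAlgHom F ℝ σ) (φ₂ := RingHom.equivRatAlgHom F ℝ τ)
      (by intro x hx; rw [Set.mem_singleton_iff] at hx; subst hx; simpa using h)
    exact (RingHom.equivRatAlgHom F ℝ).injective this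
  set T : Finset ℝ := Finset.univ.image (fun σ : F →+* ℝ => σ θ) with hT
  have hTcard : T.card = Nat.card (F →+* ℝ) := by
    rw [hT, Finset.card_image_of_injective _ hinj, Finset.card_univ, Nat.card_eq_fintype_card]
  obtain ⟨q, hq1, hq2⟩ := key_cut T l (by omega)
  refine ⟨θ - (q : F), ?_, ?_, ?_⟩
  · rw [eq_top_iff, ← hθ]
    rw [IntermediateField.adjoin_simple_le_iff]
    have h1 : θ - (q : F) ∈ IntermediateField.adjoin ℚ {θ - (q : F)} :=
      IntermediateField.mem_adjoin_simple_self ℚ _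
    have h2 : (q : F) ∈ IntermediateField.adjoin ℚ {θ - (q : F)} := by
      exact SubfieldClass.ratCast_mem _ q
    simpa using add_mem h1 h2
  · have : {σ : F →+* ℝ // 0 < σ (θ - (q : F))} = {σ : F →+* ℝ // (q : ℝ) < σ θ} := by
      congr 1; ext σ
      rw [map_sub, map_ratCast, sub_pos]
    rw [this, Nat.card_eq_fintype_card, Fintype.card_subtype]
    have himg : (Finset.univ.filter (fun σ : F →+* ℝ => (q : ℝ) < σ θ)).card
        = (T.filter (fun x => (q : ℝ) < x)).card := by
      rw [hT, Finset.filter_image, Finset.card_image_of_injective _ hinj]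
    rw [himg]
    have hpart : (T.filter (fun x => x < (q : ℝ))).card
        + (T.filter (fun x => (q : ℝ) < x)).card = T.card := by
      rw [show (T.filter fun x => (q : ℝ) < x) =
          (T.filter fun x => ¬ x < (q : ℝ)) from Finset.filter_congr
          (fun x hx => by
            constructor
            · exact fun h => not_lt.2 h.le
            · exact fun h => lt_of_le_of_ne (not_lt.1 h) (Ne.symm (hq2 x hx)))]
      exact Finset.card_filter_add_card_filter_not _
    omega
  · have : {σ : F →+* ℝ // σ (θ - (q : F)) < 0} = {σ : F →+* ℝ // σ θ < (q : ℝ)} := by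
      congr 1; ext σ
      rw [map_sub, map_ratCast, sub_neg]
    rw [this, Nat.card_eq_fintype_card, Fintype.card_subtype]
    have himg : (Finset.univ.filter (fun σ : F →+* ℝ => σ θ < (q : ℝ))).card
        = (T.filter (fun x => x < (q : ℝ))).card := by
      rw [hT, Finset.filter_image, Finset.card_image_of_injective _ hinj]
    rw [himg, hq1]
end

section
/- Let F be a totally real number field, i.e., every ring homomorphism F → ℂ has image contained in ℝ, and let S be the set of real embeddings of F. Then there exist a primitive element u of F (i.e., ℚ(u) = F) and an embedding τ ∈ S such that τ(u) > 0 and σ(u) < 0 for every σ ∈ S with σ ≠ τ. -/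
/-- A totally real number field `F` has a primitive element `u` and a real embedding `τ`
with `τ u > 0` and `σ u < 0` for every other real embedding `σ`. -/
theorem stmt_1 (F : Type*) [Field F] [NumberField F]
    (htr : ∀ (φ : F →+* ℂ) (x : F), (φ x).im = 0) :
    ∃ (u : F) (τ : F →+* ℝ), IntermediateField.adjoin ℚ {u} = ⊤ ∧
      0 < τ u ∧ ∀ σ : F →+* ℝ, σ ≠ τ → σ u < 0 := by
  classical
  -- a real embedding exists
  obtain ⟨φ⟩ : Nonempty (F →+* ℂ) := inferInstance
  have hreal : Nonempty (F →+* ℝ) := by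
    refine ⟨{ toFun := fun x => (φ x).re
              map_one' := by simp
              map_mul' := ?_
              map_zero' := by simp
              map_add' := by simp }⟩
    intro x y
    simp [Complex.mul_re, htr φ]
  obtain ⟨α, hα⟩ := Field.exists_primitive_element ℚ F
  -- embeddings are determined by their value at α
  have hinj : Function.Injective (fun σ : F →+* ℝ => σ α) := by
    intro σ σ' h
    refine RingHom.ext fun x => ?_
    have hx : x ∈ IntermediateField.adjoin ℚ {α} := hα ▸ IntermediateField.mem_top
    induction hx using IntermediateField.adjoin_induction with
    | mem x hx => rw [Set.mem_singleton_iff.mp hx]; exact h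
    | algebraMap x => simp
    | add x y _ _ hx hy => simp [hx, hy]
    | inv x _ hx => simp [hx]
    | mul x y _ _ hx hy => simp [hx, hy]
  -- pick τ maximizing σ α
  obtain ⟨τ, -, hτmax⟩ := Finset.exists_max_image Finset.univ
    (fun σ : F →+* ℝ => σ α) ⟨hreal.some, Finset.mem_univ _⟩
  have hlt : ∀ σ : F →+* ℝ, σ ≠ τ → σ α < τ α := by
    intro σ hσ
    exact lt_of_le_of_ne (hτmax σ (Finset.mem_univ _)) (fun h => hσ (hinj h))
  -- choose a rational strictly between the others and τ α
  set s : Finset (F →+* ℝ) := Finset.univ.erase τ with hs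
  obtain ⟨q, hq1, hq2⟩ : ∃ q : ℚ, (∀ σ ∈ s, σ α < (q : ℝ)) ∧ (q : ℝ) < τ α := by
    rcases s.eq_empty_or_nonempty with h | h
    · obtain ⟨q, hq⟩ := exists_rat_lt (τ α)
      exact ⟨q, by simp [h], hq⟩
    · have hsup : s.sup' h (fun σ : F →+* ℝ => σ α) < τ α :=
        (Finset.sup'_lt_iff h).mpr (fun σ hσ => hlt σ (Finset.mem_erase.mp hσ).1)
      obtain ⟨q, hq1, hq2⟩ := exists_rat_btwn hsup
      exact ⟨q, fun σ hσ =>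
        lt_of_le_of_lt (Finset.le_sup' (fun σ : F →+* ℝ => σ α) hσ) hq1, hq2⟩
  refine ⟨α - (q : F), τ, ?_, ?_, ?_⟩
  · rw [eq_top_iff, ← hα]
    rw [IntermediateField.adjoin_simple_le_iff]
    have h1 : α - (q : F) ∈ IntermediateField.adjoin ℚ {α - (q : F)} :=
      IntermediateField.subset_adjoin ℚ _ rfl
    have h2 : (q : F) ∈ IntermediateField.adjoin ℚ {α - (q : F)} := by
      exact SubfieldClass.ratCast_mem _ q
    have := add_mem h1 h2
    simpa using this
  · have : τ ((q : F)) = (q : ℝ) := by simp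
    rw [map_sub, this]
    linarith
  · intro σ hσ
    have : σ ((q : F)) = (q : ℝ) := by simp
    rw [map_sub, this]
    have := hq1 σ (Finset.mem_erase.mpr ⟨hσ, Finset.mem_univ _⟩)
    linarith
end

section
/- For every natural number n ≥ 2 there exists a number field K of degree n over ℚ having exactly one complex infinite place and exactly n − 2 real infinite places; equivalently, exactly two of the n ring homomorphisms K → ℂ have image not contained in ℝ. -/
open Polynomial

namespace Stmt5Aux

noncomputable section

variable (m : ℕ)

def B : ℤ := (2 * m + 3) ^ m

def M : ℤ := 2 * (B m + 2) ^ 2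

def gZ : ℤ[X] := ∏ j ∈ Finset.range m, (X - C (2 * (j + 1) : ℤ))

def fZ : ℤ[X] := gZ m * (X ^ 2 + C (2 * M m)) - C 2

lemma B_pos : 0 < B m := by unfold B; positivity

lemma M_ge : 18 ≤ M m := by
  have h1 : (1:ℤ) ≤ B m := B_pos m
  have h : (3:ℤ) ≤ B m + 2 := by linarith
  have : (9:ℤ) ≤ (B m + 2)^2 := by nlinarith
  unfold M; linarith

lemma gZ_monic : (gZ m).Monic :=
  monic_prod_of_monic _ _ fun _ _ => monic_X_sub_C _

lemma gZ_natDegree : (gZ m).natDegree = m := by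
  unfold gZ
  rw [natDegree_prod _ _ (fun i _ => X_sub_C_ne_zero _)]
  simp only [natDegree_X_sub_C, Finset.sum_const, smul_eq_mul, Finset.card_range, mul_one]

lemma hZ_monic : (gZ m * (X ^ 2 + C (2 * M m))).Monic :=
  (gZ_monic m).mul (monic_X_pow_add_C _ (by norm_num))

lemma hZ_natDegree : (gZ m * (X ^ 2 + C (2 * M m))).natDegree = m + 2 := by
  rw [(gZ_monic m).natDegree_mul (monic_X_pow_add_C _ (by norm_num)), gZ_natDegree,
    natDegree_X_pow_add_C]

lemma fZ_natDegree : (fZ m).natDegree = m + 2 := by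
  rw [fZ, natDegree_sub_C, hZ_natDegree]

lemma fZ_monic : (fZ m).Monic := by
  have : (fZ m).leadingCoeff = 1 := by
    rw [leadingCoeff, fZ_natDegree, fZ, coeff_sub, coeff_C, if_neg (by omega)]
    have := (hZ_monic m)
    rw [Monic, leadingCoeff, hZ_natDegree] at this
    rw [this]; ring
  exact this

lemma two_dvd_twoM : (4:ℤ) ∣ 2 * M m := ⟨(B m + 2)^2, by rw [M]; ring⟩

lemma fZ_mod2 : (fZ m).map (Int.castRingHom (ZMod 2)) = X ^ (m + 2) := by
  have hg : (gZ m).map (Int.castRingHom (ZMod 2)) = X ^ m := by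
    rw [gZ, Polynomial.map_prod]
    have hj : ∀ j ∈ Finset.range m, ((X : ℤ[X]) - C (2 * (j + 1) : ℤ)).map
        (Int.castRingHom (ZMod 2)) = X := by
      intro j _
      rw [Polynomial.map_sub, map_X, map_C]
      have : ((Int.castRingHom (ZMod 2)) (2 * (j + 1) : ℤ)) = 0 := by
        rw [eq_intCast, ZMod.intCast_zmod_eq_zero_iff_dvd]; exact ⟨j + 1, rfl⟩
      simp [this]
    rw [Finset.prod_congr rfl hj, Finset.prod_const, Finset.card_range]
  have hM : ((Int.castRingHom (ZMod 2)) (2 * M m)) = 0 := by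
    rw [eq_intCast, ZMod.intCast_zmod_eq_zero_iff_dvd]; exact ⟨M m, rfl⟩
  have h2' : ((Int.castRingHom (ZMod 2)) (2 : ℤ)) = 0 := by
    rw [eq_intCast, ZMod.intCast_zmod_eq_zero_iff_dvd]; norm_num
  rw [fZ, Polynomial.map_sub, Polynomial.map_mul, Polynomial.map_add, Polynomial.map_pow,
    map_X, map_C, map_C, hg, hM, h2', C_0, add_zero, sub_zero, ← pow_add]

lemma fZ_coeff_mem {i : ℕ} (hi : i < m + 2) : (fZ m).coeff i ∈ Ideal.span ({2} : Set ℤ) := by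
  rw [Ideal.mem_span_singleton]
  have := congrArg (fun p => Polynomial.coeff p i) (fZ_mod2 m)
  simp only [coeff_map, coeff_X_pow, if_neg (by omega : ¬ i = m + 2)] at this
  rwa [eq_intCast, ZMod.intCast_zmod_eq_zero_iff_dvd] at this

lemma fZ_coeff_zero : (fZ m).coeff 0 = (gZ m).coeff 0 * (2 * M m) - 2 := by
  rw [fZ, coeff_sub, mul_coeff_zero, coeff_add, coeff_C, coeff_X_pow]
  norm_num

lemma fZ_irreducible : Irreducible (fZ m) := by
  refine Polynomial.IsEisensteinAt.irreducible
    (𝓟 := Ideal.span ({2} : Set ℤ)) ?_ ?_ ((fZ_monic m).isPrimitive) ?_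
  · refine ⟨?_, ?_, ?_⟩
    · rw [(fZ_monic m).leadingCoeff, Ideal.mem_span_singleton]
      norm_num
    · intro i hi
      exact fZ_coeff_mem m (by rw [fZ_natDegree] at hi; exact hi)
    · rw [Ideal.span_singleton_pow, Ideal.mem_span_singleton, fZ_coeff_zero]
      obtain ⟨t, ht⟩ := two_dvd_twoM m
      intro ⟨u, hu⟩
      rw [ht] at hu
      have h4 : (2:ℤ) = 4 * ((gZ m).coeff 0 * t - u) := by linear_combination -hu
      have : (4:ℤ) ∣ 2 := ⟨_, h4⟩
      norm_num at this
  · rw [Ideal.span_singleton_prime (by norm_num)]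
    exact Int.prime_two
  · rw [fZ_natDegree]; omega

lemma coeff_prod_bound (A : ℤ) (hA : 0 ≤ A) (a : ℕ → ℤ) :
    ∀ s : ℕ, (∀ j, j < s → |a j| ≤ A) →
      ∀ k, |(∏ j ∈ Finset.range s, (X - C (a j))).coeff k| ≤ (A + 1) ^ s := by
  intro s
  induction s with
  | zero =>
    intro _ k
    simp only [Finset.range_zero, Finset.prod_empty, coeff_one, pow_zero]
    split_ifs <;> simp
  | succ s ih =>
    intro ha k
    have ihs := ih (fun j hj => ha j (by omega))
    rw [Finset.prod_range_succ]
    set p := ∏ j ∈ Finset.range s, (X - C (a j)) with hp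
    have hcoeff : (p * (X - C (a s))).coeff k = (p * X ^ 1).coeff k - p.coeff k * a s := by
      rw [mul_sub, coeff_sub, coeff_mul_C, pow_one]
    rw [hcoeff]
    have h1 : |(p * X ^ 1).coeff k| ≤ (A + 1) ^ s := by
      rw [coeff_mul_X_pow']
      split_ifs
      · exact ihs _
      · simpa using pow_nonneg (by linarith : (0:ℤ) ≤ A + 1) s
    have h2 : |p.coeff k * a s| ≤ (A + 1) ^ s * A := by
      rw [abs_mul]
      exact mul_le_mul (ihs k) (ha s (by omega)) (abs_nonneg _) (by positivity)
    have h3 : |(p * X ^ 1).coeff k - p.coeff k * a s| ≤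
        |(p * X ^ 1).coeff k| + |p.coeff k * a s| := abs_sub _ _
    have h4 : (A + 1) ^ s + (A + 1) ^ s * A = (A + 1) ^ (s + 1) := by ring
    linarith

lemma gZ_coeff_bound (k : ℕ) : |(gZ m).coeff k| ≤ B m := by
  have h := coeff_prod_bound (2 * (m:ℤ) + 2) (by positivity) (fun j => (2 * (j + 1) : ℤ)) m
    (fun j hj => by
      show |2 * ((j:ℤ) + 1)| ≤ 2 * (m:ℤ) + 2
      have : (j:ℤ) + 1 ≤ m := by exact_mod_cast hj
      rw [abs_of_nonneg (by positivity)]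
      linarith) k
  have hg : gZ m = ∏ j ∈ Finset.range m, (X - C ((fun j => (2 * ((j:ℤ) + 1) : ℤ)) j)) := rfl
  rw [hg]
  have hB : B m = (2 * (m:ℤ) + 2 + 1) ^ m := by rw [B]; ring_nf
  rw [hB]
  exact h

lemma one_le_B : (1:ℤ) ≤ B m := B_pos m

lemma fZ_coeff_top : (fZ m).coeff (m + 2) = 1 := by
  have := fZ_monic m
  rw [Monic, leadingCoeff, fZ_natDegree] at this
  exact this

lemma gZ_coeff_self : (gZ m).coeff m = 1 := by
  have := gZ_monic m
  rw [Monic, leadingCoeff, gZ_natDegree] at this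
  exact this

lemma fZ_eq : fZ m = gZ m * X ^ 2 + gZ m * C (2 * M m) - C 2 := by
  rw [fZ]; ring

lemma fZ_coeff_m1_bound : |(fZ m).coeff (m + 1)| ≤ B m := by
  have h0 : (gZ m).coeff (m + 1) = 0 :=
    coeff_eq_zero_of_natDegree_lt (by rw [gZ_natDegree]; omega)
  rw [fZ_eq, coeff_sub, coeff_add, coeff_mul_C, h0, zero_mul, add_zero, coeff_mul_X_pow',
    coeff_C, if_neg (by omega : ¬ m + 1 = 0), sub_zero]
  split_ifs with h
  · exact gZ_coeff_bound m _
  · simpa using le_of_lt (B_pos m)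

lemma fZ_coeff_m_bound : |(fZ m).coeff m - 2 * M m| ≤ B m + 2 := by
  rw [fZ_eq, coeff_sub, coeff_add, coeff_mul_C, gZ_coeff_self, one_mul, coeff_mul_X_pow',
    coeff_C]
  have hB := gZ_coeff_bound m (m - 2)
  have hBpos := B_pos m
  rw [abs_le] at hB
  split_ifs with h1 h2 <;> (rw [abs_le]; constructor <;> push_cast <;> linarith)

lemma desc_ineq :
    ((m + 1).descFactorial m) ^ 2 ≤ 12 * ((m + 2).descFactorial m) * (m.descFactorial m) := by
  rw [Nat.descFactorial_eq_factorial_mul_choose, Nat.descFactorial_eq_factorial_mul_choose,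
    Nat.descFactorial_eq_factorial_mul_choose]
  have h1 : (m + 1).choose m = m + 1 := Nat.choose_succ_self_right m
  have h2 : m.choose m = 1 := Nat.choose_self m
  have h3 : (m + 2).choose 2 * 2 = (m + 2) * (m + 1) := by
    have := Nat.add_one_mul_choose_eq (m + 1) 1
    simpa [Nat.choose_one_right] using this.symm
  have h4 : (m + 2).choose m = (m + 2).choose 2 := by
    have := Nat.choose_symm (by omega : 2 ≤ m + 2)
    simpa using this
  rw [h1, h2, h4]
  set c := (m + 2).choose 2
  set F := m.factorial
  have hF : 1 ≤ F := Nat.one_le_iff_ne_zero.mpr (Nat.factorial_ne_zero m)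
  nlinarith [h3, sq_nonneg F]

def fR : ℝ[X] := (fZ m).map (Int.castRingHom ℝ)

lemma fR_monic : (fR m).Monic := (fZ_monic m).map _

lemma fR_natDegree : (fR m).natDegree = m + 2 := by
  rw [fR, (fZ_monic m).natDegree_map, fZ_natDegree]

lemma fR_coeff (k : ℕ) : (fR m).coeff k = ((fZ m).coeff k : ℝ) := by
  rw [fR, coeff_map, eq_intCast]

lemma descFactorial_pos' {a b : ℕ} (h : b ≤ a) : 0 < a.descFactorial b := by
  rw [Nat.descFactorial_eq_factorial_mul_choose]
  exact Nat.mul_pos (Nat.factorial_pos _) (Nat.choose_pos h)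

lemma key_ineq :
    (((m + 1).descFactorial m : ℤ)) ^ 2 * ((fZ m).coeff (m + 1)) ^ 2
      < 4 * ((m + 2).descFactorial m : ℤ)
        * (((m).descFactorial m : ℤ) * (fZ m).coeff m) := by
  have hB := B_pos m
  have hc1 := abs_le.mp (fZ_coeff_m1_bound m)
  have hc0 := abs_le.mp (fZ_coeff_m_bound m)
  have hM : M m = 2 * (B m + 2) ^ 2 := rfl
  have hdZ : ((m + 1).descFactorial m : ℤ) ^ 2
      ≤ 12 * ((m + 2).descFactorial m : ℤ) * (m.descFactorial m : ℤ) := by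
    exact_mod_cast desc_ineq m
  have hd2pos : (0:ℤ) < ((m + 2).descFactorial m : ℤ) := by
    exact_mod_cast descFactorial_pos' (by omega : m ≤ m + 2)
  have hd0pos : (0:ℤ) < ((m).descFactorial m : ℤ) := by
    exact_mod_cast descFactorial_pos' (le_refl m)
  have hc1sq : (fZ m).coeff (m + 1) ^ 2 ≤ B m ^ 2 := by nlinarith [hc1.1, hc1.2]
  have hc0big : 3 * (B m + 2) ^ 2 ≤ (fZ m).coeff m := by nlinarith [hc0.1]
  have hstrict : 3 * (fZ m).coeff (m + 1) ^ 2 < (fZ m).coeff m := by nlinarith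
  have hpos4 : (0:ℤ) < 4 * ((m + 2).descFactorial m : ℤ) * ((m).descFactorial m : ℤ) := by
    positivity
  calc ((m + 1).descFactorial m : ℤ) ^ 2 * ((fZ m).coeff (m + 1)) ^ 2
      ≤ 12 * ((m + 2).descFactorial m : ℤ) * (m.descFactorial m : ℤ)
        * ((fZ m).coeff (m + 1)) ^ 2 :=
        mul_le_mul_of_nonneg_right hdZ (sq_nonneg _)
    _ = (4 * ((m + 2).descFactorial m : ℤ) * ((m).descFactorial m : ℤ))
        * (3 * ((fZ m).coeff (m + 1)) ^ 2) := by ring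
    _ < (4 * ((m + 2).descFactorial m : ℤ) * ((m).descFactorial m : ℤ))
        * ((fZ m).coeff m) := mul_lt_mul_of_pos_left hstrict hpos4
    _ = 4 * ((m + 2).descFactorial m : ℤ)
        * (((m).descFactorial m : ℤ) * (fZ m).coeff m) := by ring

lemma quad_eval_ne_zero (x : ℝ) : (derivative^[m] (fR m)).eval x ≠ 0 := by
  have hdeg : (derivative^[m] (fR m)).natDegree < 3 := by
    have h := natDegree_iterate_derivative (fR m) m
    rw [fR_natDegree] at h
    omega
  have hc : ∀ i : ℕ, (derivative^[m] (fR m)).coeff i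
      = ((i + m).descFactorial m : ℝ) * ((fZ m).coeff (i + m) : ℝ) := by
    intro i
    rw [coeff_iterate_derivative, fR_coeff, nsmul_eq_mul]
  have heval : (derivative^[m] (fR m)).eval x
      = ((m + 2).descFactorial m : ℝ) * x ^ 2
      + ((m + 1).descFactorial m : ℝ) * ((fZ m).coeff (m + 1) : ℝ) * x
      + ((m).descFactorial m : ℝ) * ((fZ m).coeff m : ℝ) := by
    rw [eval_eq_sum_range' hdeg x, Finset.sum_range_succ, Finset.sum_range_succ,
      Finset.sum_range_succ, Finset.sum_range_zero, hc 0, hc 1, hc 2,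
      show (2 + m) = m + 2 from by omega, show (1 + m) = m + 1 from by omega,
      show (0 + m) = m from by omega, fZ_coeff_top]
    push_cast
    ring
  rw [heval]
  set d2 : ℝ := ((m + 2).descFactorial m : ℝ) with hd2
  set d1 : ℝ := ((m + 1).descFactorial m : ℝ) with hd1
  set d0 : ℝ := ((m).descFactorial m : ℝ) with hd0
  set c1 : ℝ := ((fZ m).coeff (m + 1) : ℝ) with hc1
  set c0 : ℝ := ((fZ m).coeff m : ℝ) with hc0
  have hkeyR : d1 ^ 2 * c1 ^ 2 < 4 * d2 * (d0 * c0) := by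
    rw [hd1, hd2, hd0, hc1, hc0]
    exact_mod_cast key_ineq m
  have hdisc : discrim d2 (d1 * c1) (d0 * c0) < 0 := by
    rw [discrim]
    nlinarith [hkeyR]
  have hne := quadratic_ne_zero_of_discrim_ne_sq
    (a := d2) (b := d1 * c1) (c := d0 * c0)
    (fun s => by
      intro h
      have hs : (0:ℝ) ≤ s ^ 2 := sq_nonneg s
      rw [h] at hdisc
      linarith) x
  intro hx
  apply hne
  linarith [hx]

lemma card_roots_le_iterate (p : ℝ[X]) : ∀ k : ℕ,
    p.roots.card ≤ (derivative^[k] p).roots.card + k := by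
  intro k
  induction k generalizing p with
  | zero => simp
  | succ k ih =>
    calc p.roots.card ≤ p.derivative.roots.card + 1 := p.card_roots_le_derivative
      _ ≤ ((derivative^[k] p.derivative).roots.card + k) + 1 := by
          exact Nat.add_le_add_right (ih p.derivative) 1
      _ = (derivative^[k + 1] p).roots.card + (k + 1) := by
          rw [Function.iterate_succ_apply]
          omega

lemma fR_ne_zero : fR m ≠ 0 := (fR_monic m).ne_zero

lemma fR_roots_card_le : (fR m).roots.card ≤ m := by
  have h := card_roots_le_iterate (fR m) m
  have hz : (derivative^[m] (fR m)).roots = 0 := by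
    apply Multiset.eq_zero_of_forall_notMem
    intro x hx
    have hmem := (mem_roots'.mp hx).2
    exact quad_eval_ne_zero m x hmem
  rw [hz] at h
  simpa using h

def gR : ℝ[X] := (gZ m).map (Int.castRingHom ℝ)

lemma gR_eval (t : ℝ) : (gR m).eval t = ∏ j ∈ Finset.range m, (t - 2 * ((j:ℝ) + 1)) := by
  rw [gR, gZ, Polynomial.map_prod, eval_prod]
  refine Finset.prod_congr rfl fun j _ => ?_
  rw [Polynomial.map_sub, map_X, map_C, eval_sub, eval_X, eval_C, eq_intCast]
  push_cast
  ring

lemma fR_eval (t : ℝ) : (fR m).eval t = (gR m).eval t * (t ^ 2 + 2 * (M m : ℝ)) - 2 := by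
  rw [fR, gR, fZ, Polynomial.map_sub, Polynomial.map_mul, Polynomial.map_add,
    Polynomial.map_pow, map_X, map_C, map_C, eval_sub, eval_mul, eval_add, eval_pow, eval_X,
    eval_C, eval_C, eq_intCast, eq_intCast]
  push_cast
  ring

lemma sign_g {k : ℕ} (hk : k ≤ m) :
    1 ≤ (-1:ℝ) ^ (m - k) * (gR m).eval (2 * (k:ℝ) + 1) := by
  rw [gR_eval]
  rw [← Finset.prod_range_mul_prod_Ico (fun j => (2 * (k:ℝ) + 1 - 2 * ((j:ℝ) + 1))) hk]
  have h1 : 1 ≤ ∏ j ∈ Finset.range k, (2 * (k:ℝ) + 1 - 2 * ((j:ℝ) + 1)) := by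
    have := Finset.prod_le_prod (f := fun _ : ℕ => (1:ℝ))
      (g := fun j : ℕ => (2 * (k:ℝ) + 1 - 2 * ((j:ℝ) + 1))) (s := Finset.range k)
      (fun _ _ => zero_le_one)
      (fun j hj => by
        show (1:ℝ) ≤ 2 * (k:ℝ) + 1 - 2 * ((j:ℝ) + 1)
        have : (j:ℝ) + 1 ≤ k := by exact_mod_cast Finset.mem_range.mp hj
        linarith)
    simpa using this
  have h2 : ∀ j ∈ Finset.Ico k m, (2 * (k:ℝ) + 1 - 2 * ((j:ℝ) + 1))
      = -1 * (2 * ((j:ℝ) + 1) - (2 * (k:ℝ) + 1)) := fun j _ => by ring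
  rw [Finset.prod_congr rfl h2, Finset.prod_mul_distrib, Finset.prod_const, Nat.card_Ico]
  have h3 : 1 ≤ ∏ j ∈ Finset.Ico k m, (2 * ((j:ℝ) + 1) - (2 * (k:ℝ) + 1)) := by
    have := Finset.prod_le_prod (f := fun _ : ℕ => (1:ℝ))
      (g := fun j : ℕ => (2 * ((j:ℝ) + 1) - (2 * (k:ℝ) + 1))) (s := Finset.Ico k m)
      (fun _ _ => zero_le_one)
      (fun j hj => by
        show (1:ℝ) ≤ 2 * ((j:ℝ) + 1) - (2 * (k:ℝ) + 1)
        have : (k:ℝ) ≤ j := by exact_mod_cast (Finset.mem_Ico.mp hj).1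
        have hj1 : (k:ℝ) + 1 ≤ (j:ℝ) + 1 := by linarith
        linarith)
    simpa using this
  have hsq : (-1:ℝ) ^ (m - k) * (-1:ℝ) ^ (m - k) = 1 := by
    rw [← pow_add]
    exact Even.neg_one_pow ⟨m - k, rfl⟩
  calc (1:ℝ) = 1 * 1 := by ring
    _ ≤ (∏ j ∈ Finset.range k, (2 * (k:ℝ) + 1 - 2 * ((j:ℝ) + 1)))
        * ∏ j ∈ Finset.Ico k m, (2 * ((j:ℝ) + 1) - (2 * (k:ℝ) + 1)) := by
        apply mul_le_mul h1 h3 zero_le_one (le_trans zero_le_one h1)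
    _ = (-1:ℝ) ^ (m - k) * ((∏ j ∈ Finset.range k, (2 * (k:ℝ) + 1 - 2 * ((j:ℝ) + 1)))
        * ((-1:ℝ) ^ (m - k) * ∏ j ∈ Finset.Ico k m, (2 * ((j:ℝ) + 1) - (2 * (k:ℝ) + 1)))) := by
        rw [show ∀ a b c : ℝ, c * (a * (c * b)) = (c * c) * (a * b) from fun a b c => by ring,
          hsq, one_mul]

lemma M_cast_ge : (36:ℝ) ≤ 2 * (M m : ℝ) := by
  have := M_ge m
  have : (18:ℝ) ≤ (M m : ℝ) := by exact_mod_cast this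
  linarith

lemma sign_f {k : ℕ} (hk : k ≤ m) :
    0 < (-1:ℝ) ^ (m - k) * (fR m).eval (2 * (k:ℝ) + 1) := by
  set t : ℝ := 2 * (k:ℝ) + 1
  set s : ℝ := (-1:ℝ) ^ (m - k) with hs
  have hg : 1 ≤ s * (gR m).eval t := sign_g m hk
  have hM := M_cast_ge m
  have hsor : s = 1 ∨ s = -1 := neg_one_pow_eq_or ℝ (m - k)
  have ht2 : (0:ℝ) ≤ t ^ 2 := sq_nonneg t
  have hkey : 0 ≤ (s * (gR m).eval t - 1) * (t ^ 2 + 2 * (M m : ℝ)) :=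
    mul_nonneg (by linarith) (by linarith)
  have hsle : s ≤ 1 ∧ -1 ≤ s := by rcases hsor with h | h <;> rw [h] <;> norm_num
  rw [fR_eval]
  nlinarith [hkey, hsle.1, hsle.2]

lemma exists_root_Ioo {k : ℕ} (hk : k < m) :
    ∃ x ∈ Set.Ioo (2 * (k:ℝ) + 1) (2 * (k:ℝ) + 3), (fR m).eval x = 0 := by
  have h1 : 0 < (-1:ℝ) ^ (m - k) * (fR m).eval (2 * (k:ℝ) + 1) := sign_f m (le_of_lt hk)
  have h2 : 0 < (-1:ℝ) ^ (m - (k + 1)) * (fR m).eval (2 * ((k:ℝ) + 1) + 1) := by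
    have := sign_f m (show k + 1 ≤ m from hk)
    push_cast at this
    exact this
  have hpow : (-1:ℝ) ^ (m - k) = -1 * (-1:ℝ) ^ (m - (k + 1)) := by
    rw [show m - k = (m - (k + 1)) + 1 from by omega, pow_succ]
    ring
  have hsq : (-1:ℝ) ^ (m - (k+1)) * (-1:ℝ) ^ (m - (k+1)) = 1 := by
    rw [← pow_add]
    exact Even.neg_one_pow ⟨m - (k+1), rfl⟩
  have hprod : (fR m).eval (2 * (k:ℝ) + 1) * (fR m).eval (2 * (k:ℝ) + 3) < 0 := by
    have h2' : 0 < (-1:ℝ) ^ (m - (k + 1)) * (fR m).eval (2 * (k:ℝ) + 3) := by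
      have : 2 * ((k:ℝ) + 1) + 1 = 2 * (k:ℝ) + 3 := by ring
      rwa [this] at h2
    have h3 := mul_pos h1 h2'
    rw [hpow] at h3
    have heq : (-1 * (-1:ℝ) ^ (m - (k+1)) * (fR m).eval (2 * (k:ℝ) + 1))
        * ((-1:ℝ) ^ (m - (k+1)) * (fR m).eval (2 * (k:ℝ) + 3))
        = -(((-1:ℝ) ^ (m - (k+1)) * (-1:ℝ) ^ (m - (k+1)))
          * ((fR m).eval (2 * (k:ℝ) + 1) * (fR m).eval (2 * (k:ℝ) + 3))) := by ring
    rw [heq, hsq, one_mul] at h3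
    linarith
  have hab : (2 * (k:ℝ) + 1) < 2 * (k:ℝ) + 3 := by linarith
  have hcont : ContinuousOn (fun x => (fR m).eval x) (Set.Icc (2 * (k:ℝ) + 1) (2 * (k:ℝ) + 3)) :=
    (fR m).continuous.continuousOn
  rcases mul_neg_iff.mp hprod with ⟨hpos, hneg⟩ | ⟨hneg, hpos⟩
  · have := intermediate_value_Ioo' (le_of_lt hab) hcont
    have h0 : (0:ℝ) ∈ Set.Ioo ((fR m).eval (2 * (k:ℝ) + 3)) ((fR m).eval (2 * (k:ℝ) + 1)) :=
      ⟨hneg, hpos⟩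
    obtain ⟨x, hx, hfx⟩ := this h0
    exact ⟨x, hx, hfx⟩
  · have := intermediate_value_Ioo (le_of_lt hab) hcont
    have h0 : (0:ℝ) ∈ Set.Ioo ((fR m).eval (2 * (k:ℝ) + 1)) ((fR m).eval (2 * (k:ℝ) + 3)) :=
      ⟨hneg, hpos⟩
    obtain ⟨x, hx, hfx⟩ := this h0
    exact ⟨x, hx, hfx⟩

lemma fR_roots_card_ge : m ≤ (fR m).roots.card := by
  have H : ∀ k : ℕ, ∃ x : ℝ, k < m →
      x ∈ Set.Ioo (2 * (k:ℝ) + 1) (2 * (k:ℝ) + 3) ∧ (fR m).eval x = 0 := by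
    intro k
    by_cases hk : k < m
    · obtain ⟨x, hx1, hx2⟩ := exists_root_Ioo m hk
      exact ⟨x, fun _ => ⟨hx1, hx2⟩⟩
    · exact ⟨0, fun h => absurd h hk⟩
  choose r hr using H
  have hmono : ∀ a b : ℕ, a < m → b < m → a < b → r a < r b := by
    intro a b ha hb hab
    have h1 := (hr a ha).1
    have h2 := (hr b hb).1
    have : (a:ℝ) + 1 ≤ (b:ℝ) := by exact_mod_cast hab
    have := h1.2
    have := h2.1
    simp only [Set.mem_Ioo] at h1 h2
    linarith [h1.2, h2.1]
  have hinj : Set.InjOn r (Finset.range m : Set ℕ) := by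
    intro a ha b hb hab
    simp only [Finset.coe_range, Set.mem_Iio] at ha hb
    rcases lt_trichotomy a b with h | h | h
    · exact absurd hab (ne_of_lt (hmono a b ha hb h))
    · exact h
    · exact absurd hab.symm (ne_of_lt (hmono b a hb ha h))
  have hmaps : ∀ k ∈ Finset.range m, r k ∈ (fR m).roots.toFinset := by
    intro k hk
    rw [Multiset.mem_toFinset, mem_roots']
    exact ⟨fR_ne_zero m, (hr k (Finset.mem_range.mp hk)).2⟩
  have := Finset.card_le_card_of_injOn r hmaps hinj
  rw [Finset.card_range] at this
  exact le_trans this ((fR m).roots.toFinset_card_le)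

lemma fR_roots_card : (fR m).roots.card = m :=
  le_antisymm (fR_roots_card_le m) (fR_roots_card_ge m)

def fQ : ℚ[X] := (fZ m).map (Int.castRingHom ℚ)

def fC : ℂ[X] := (fZ m).map (Int.castRingHom ℂ)

lemma fQ_monic : (fQ m).Monic := (fZ_monic m).map _

lemma fQ_natDegree : (fQ m).natDegree = m + 2 := by
  rw [fQ, (fZ_monic m).natDegree_map, fZ_natDegree]

lemma fQ_irreducible : Irreducible (fQ m) :=
  (Polynomial.IsPrimitive.Int.irreducible_iff_irreducible_map_cast
    ((fZ_monic m).isPrimitive)).mp (fZ_irreducible m)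

lemma fQ_separable : (fQ m).Separable := (fQ_irreducible m).separable

lemma fC_eq_map_fQ : fC m = (fQ m).map (algebraMap ℚ ℂ) := by
  rw [fQ, fC, Polynomial.map_map]
  congr 1

lemma fC_eq_map_fR : fC m = (fR m).map Complex.ofRealHom := by
  rw [fR, fC, Polynomial.map_map]
  congr 1

lemma fR_eq_map_fQ : fR m = (fQ m).map (algebraMap ℚ ℝ) := by
  rw [fQ, fR, Polynomial.map_map]
  congr 1

lemma fC_monic : (fC m).Monic := (fZ_monic m).map _

lemma fC_natDegree : (fC m).natDegree = m + 2 := by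
  rw [fC, (fZ_monic m).natDegree_map, fZ_natDegree]

lemma fC_roots_nodup : (fC m).roots.Nodup := by
  apply Polynomial.nodup_roots
  rw [fC_eq_map_fQ]
  exact (fQ_separable m).map

lemma fR_roots_nodup : (fR m).roots.Nodup := by
  apply Polynomial.nodup_roots
  rw [fR_eq_map_fQ]
  exact (fQ_separable m).map

lemma fC_roots_card : (fC m).roots.card = m + 2 := by
  rw [splits_iff_card_roots.mp (IsAlgClosed.splits (k := ℂ) (fC m)), fC_natDegree]

lemma fC_eval_ofReal (x : ℝ) : (fC m).eval (x : ℂ) = (((fR m).eval x : ℝ) : ℂ) := by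
  rw [fC_eq_map_fR]
  rw [show ((x : ℂ)) = Complex.ofRealHom x from rfl, eval_map, eval₂_at_apply]
  rfl

lemma real_roots_card [DecidablePred (fun z : ℂ => z.im = 0)] : ((fC m).roots.filter (fun z => z.im = 0)).card = m := by
  classical
  have h1 : Multiset.map (fun x : ℝ => (x : ℂ)) (fR m).roots
      ≤ (fC m).roots.filter (fun z => z.im = 0) := by
    rw [Multiset.le_iff_subset ((fR_roots_nodup m).map Complex.ofReal_injective)]
    intro z hz
    obtain ⟨x, hx, rfl⟩ := Multiset.mem_map.mp hz
    have hroot : (fR m).eval x = 0 := (mem_roots'.mp hx).2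
    rw [Multiset.mem_filter]
    constructor
    · rw [mem_roots']
      refine ⟨?_, ?_⟩
      · exact (fC_monic m).ne_zero
      · show (fC m).eval (x : ℂ) = 0
        rw [fC_eval_ofReal, hroot, Complex.ofReal_zero]
    · exact Complex.ofReal_im x
  have h2 : (fC m).roots.filter (fun z => z.im = 0)
      ≤ Multiset.map (fun x : ℝ => (x : ℂ)) (fR m).roots := by
    rw [Multiset.le_iff_subset ((fC_roots_nodup m).filter _)]
    intro z hz
    obtain ⟨hzr, hzim⟩ := Multiset.mem_filter.mp hz
    have hzeq : ((z.re : ℂ)) = z := by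
      apply Complex.ext
      · simp
      · simp [hzim]
    refine Multiset.mem_map.mpr ⟨z.re, ?_, hzeq⟩
    rw [mem_roots']
    refine ⟨(fR_monic m).ne_zero, ?_⟩
    have : (((fR m).eval z.re : ℝ) : ℂ) = 0 := by
      rw [← fC_eval_ofReal, hzeq]
      exact (mem_roots'.mp hzr).2
    exact_mod_cast this
  have := le_antisymm (Multiset.card_le_card h1) (Multiset.card_le_card h2)
  rw [← this, Multiset.card_map, fR_roots_card]

lemma nonreal_roots_card [DecidablePred (fun z : ℂ => z.im = 0)] : ((fC m).roots.filter (fun z => ¬ z.im = 0)).card = 2 := by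
  classical
  have h := Multiset.filter_add_not (fun z => z.im = 0) (fC m).roots
  have hcard := congrArg Multiset.card h
  rw [Multiset.card_add, real_roots_card, fC_roots_card] at hcard
  omega

lemma natCard_mem_multiset {t : Multiset ℂ} (ht : t.Nodup) :
    Nat.card {x : ℂ // x ∈ t} = t.card := by
  classical
  rw [Nat.card_congr (Equiv.subtypeEquivRight
    (fun x => (Multiset.mem_toFinset (a := x) (s := t)).symm))]
  rw [Nat.card_eq_finsetCard t.toFinset, Multiset.toFinset_card_of_nodup ht]

end

end Stmt5Aux

open Polynomial IntermediateField in
/-- For every `n ≥ 2` there is a number field `K` of degree `n` over `ℚ` with exactly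
two embeddings into `ℂ` whose image is not contained in `ℝ` (equivalently, exactly one
complex infinite place and `n - 2` real infinite places). -/
theorem stmt_5 (n : ℕ) (hn : 2 ≤ n) :
    ∃ K : IntermediateField ℚ ℂ, FiniteDimensional ℚ K ∧
      Module.finrank ℚ K = n ∧
      Nat.card {σ : K →+* ℂ // ∃ x, (σ x).im ≠ 0} = 2 ∧
      Nat.card {σ : K →+* ℂ // ∀ x, (σ x).im = 0} = n - 2 := by
  classical
  obtain ⟨m, rfl⟩ : ∃ m, n = m + 2 := ⟨n - 2, by omega⟩
  obtain ⟨α, hαmem, hαim⟩ : ∃ z, z ∈ (Stmt5Aux.fC m).roots ∧ ¬ z.im = 0 := by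
    have h2 := Stmt5Aux.nonreal_roots_card m
    have hpos : 0 < ((Stmt5Aux.fC m).roots.filter (fun z => ¬ z.im = 0)).card := by
      rw [h2]; omega
    obtain ⟨z, hz⟩ := Multiset.card_pos_iff_exists_mem.mp hpos
    exact ⟨z, (Multiset.mem_filter.mp hz).1, (Multiset.mem_filter.mp hz).2⟩
  have hroot : (Stmt5Aux.fC m).eval α = 0 := (mem_roots'.mp hαmem).2
  have haeval : aeval α (Stmt5Aux.fQ m) = 0 := by
    rw [aeval_def, ← eval_map, ← Stmt5Aux.fC_eq_map_fQ]
    exact hroot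
  have hint : IsIntegral ℚ α :=
    ⟨Stmt5Aux.fQ m, Stmt5Aux.fQ_monic m, by rw [← aeval_def]; exact haeval⟩
  have hminpoly : minpoly ℚ α = Stmt5Aux.fQ m :=
    (minpoly.eq_of_irreducible_of_monic (Stmt5Aux.fQ_irreducible m) haeval (Stmt5Aux.fQ_monic m)).symm
  have hfin : FiniteDimensional ℚ ℚ⟮α⟯ := IntermediateField.adjoin.finiteDimensional hint
  set gen : ℚ⟮α⟯ := IntermediateField.AdjoinSimple.gen ℚ α with hgen
  have hkey : ∀ σ : ℚ⟮α⟯ →ₐ[ℚ] ℂ, (∀ x : ℚ⟮α⟯, (σ x).im = 0) ↔ (σ gen).im = 0 := by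
    intro σ
    constructor
    · intro h; exact h gen
    · intro h x
      obtain ⟨p, hp⟩ := (IntermediateField.adjoin.powerBasis hint).exists_eq_aeval' x
      have hgeneq : (IntermediateField.adjoin.powerBasis hint).gen = gen := rfl
      rw [hp, hgeneq, ← Polynomial.aeval_algHom_apply]
      have hzeq : (((σ gen).re : ℂ)) = σ gen := by
        apply Complex.ext <;> simp [h]
      rw [← hzeq]
      have hφ : (((σ gen).re : ℂ)) = (Complex.ofRealAm.restrictScalars ℚ) (σ gen).re := rfl
      rw [hφ, Polynomial.aeval_algHom_apply]
      exact Complex.ofReal_im _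
  have hkey' : ∀ σ : ℚ⟮α⟯ →+* ℂ, (∀ x : ℚ⟮α⟯, (σ x).im = 0) ↔ (σ gen).im = 0 :=
    fun σ => hkey σ.toRatAlgHom
  set E : (ℚ⟮α⟯ →ₐ[ℚ] ℂ) ≃ {x : ℂ // x ∈ (minpoly ℚ α).aroots ℂ} :=
    IntermediateField.algHomAdjoinIntegralEquiv ℚ hint with hE
  have hEgen : ∀ σ : ℚ⟮α⟯ →ₐ[ℚ] ℂ, ((E σ : ℂ)) = σ gen := by
    intro σ
    conv_rhs => rw [← Equiv.symm_apply_apply E σ]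
    exact (IntermediateField.algHomAdjoinIntegralEquiv_symm_apply_gen ℚ hint (E σ)).symm
  have haroots : (minpoly ℚ α).aroots ℂ = (Stmt5Aux.fC m).roots := by
    rw [hminpoly, aroots_def, ← Stmt5Aux.fC_eq_map_fQ]
  have count : ∀ P : ℂ → Prop, ∀ inst : DecidablePred P,
      Nat.card {σ : ℚ⟮α⟯ →+* ℂ // P (σ gen)}
      = ((Stmt5Aux.fC m).roots.filter P).card := by
    intro P inst
    have e1 : {σ : ℚ⟮α⟯ →+* ℂ // P (σ gen)} ≃ {σ : ℚ⟮α⟯ →ₐ[ℚ] ℂ // P (σ gen)} :=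
      (RingHom.equivRatAlgHom _ _).subtypeEquiv (fun σ => Iff.rfl)
    have e2 : {σ : ℚ⟮α⟯ →ₐ[ℚ] ℂ // P (σ gen)}
        ≃ {y : {x : ℂ // x ∈ (minpoly ℚ α).aroots ℂ} // P (y : ℂ)} :=
      E.subtypeEquiv (fun σ => by rw [hEgen σ])
    have e3 : {y : {x : ℂ // x ∈ (minpoly ℚ α).aroots ℂ} // P (y : ℂ)}
        ≃ {x : ℂ // x ∈ (minpoly ℚ α).aroots ℂ ∧ P x} :=
      Equiv.subtypeSubtypeEquivSubtypeInter _ _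
    have e4 : {x : ℂ // x ∈ (minpoly ℚ α).aroots ℂ ∧ P x}
        ≃ {x : ℂ // x ∈ (Stmt5Aux.fC m).roots.filter P} :=
      Equiv.subtypeEquivRight (fun x => by
        rw [haroots, Multiset.mem_filter])
    rw [Nat.card_congr (((e1.trans e2).trans e3).trans e4)]
    exact Stmt5Aux.natCard_mem_multiset ((Stmt5Aux.fC_roots_nodup m).filter P)
  refine ⟨ℚ⟮α⟯, hfin, ?_, ?_, ?_⟩
  · rw [IntermediateField.adjoin.finrank hint, hminpoly, Stmt5Aux.fQ_natDegree]
  · have := count (fun z => ¬ z.im = 0) inferInstance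
    rw [Nat.card_congr (Equiv.subtypeEquivRight
      (q := fun σ : ℚ⟮α⟯ →+* ℂ => ¬ (σ gen).im = 0)
      (fun σ => by
        show (∃ x, (σ x).im ≠ 0) ↔ ¬(σ gen).im = 0
        rw [← hkey' σ]
        exact not_forall.symm))]
    rw [this, Stmt5Aux.nonreal_roots_card]
  · have := count (fun z => z.im = 0) inferInstance
    rw [Nat.card_congr (Equiv.subtypeEquivRight
      (q := fun σ : ℚ⟮α⟯ →+* ℂ => (σ gen).im = 0)
      (fun σ => by
        show (∀ x : ℚ⟮α⟯, (σ x).im = 0) ↔ (σ gen).im = 0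
        exact hkey' σ))]
    rw [this, Stmt5Aux.real_roots_card]
    omega
end

section
/- Let n ≥ 2, let k, k₁, …, k_{n−2} be positive even integers with k₁, …, k_{n−2} pairwise distinct, and set f = (X² + k) · ∏_{i=1}^{n−2} (X − kᵢ) ∈ ℝ[X]. Then there exists ε > 0 such that for every real number a with |a| < ε, the set { x ∈ ℝ : f(x) + a = 0 } has exactly n − 2 elements, i.e., the polynomial f + a has exactly n − 2 distinct real roots. -/
open Polynomial Set Filter Topology

lemma abs_tendsto_atBot_key (p : ℝ[X]) (hdeg : 0 < p.degree) :
    Tendsto (fun x => |p.eval x|) atBot atTop := by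
  have h1 : 0 < (p.comp (-X)).degree := by
    rw [← natDegree_pos_iff_degree_pos] at hdeg ⊢
    rw [natDegree_comp]; simpa using hdeg
  have h3 := ((p.comp (-X)).abs_tendsto_atTop h1).comp tendsto_neg_atBot_atTop
  refine h3.congr fun x => ?_
  simp [Function.comp, eval_comp]

lemma key (m : ℕ) (p : ℝ[X]) (hdeg : 0 < p.degree) (r : Fin m → ℝ)
    (hr : Function.Injective r)
    (hroot : ∀ x : ℝ, p.eval x = 0 ↔ ∃ i, x = r i)
    (hder : ∀ i, p.derivative.eval (r i) ≠ 0) :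
    ∃ ε > (0:ℝ), ∀ a : ℝ, |a| < ε → {x : ℝ | p.eval x + a = 0}.ncard = m := by
  have hFc : Continuous fun x : ℝ => p.eval x := p.continuous
  -- minimal gap
  obtain ⟨d, hd0, hdle⟩ : ∃ d > (0:ℝ), ∀ i j, i ≠ j → d ≤ |r i - r j| := by
    by_cases hm : ∀ i j : Fin m, i = j
    · exact ⟨1, one_pos, fun i j hij => absurd (hm i j) hij⟩
    · push_neg at hm
      obtain ⟨i0, j0, hij0⟩ := hm
      set D := (Finset.univ.filter fun pr : Fin m × Fin m => pr.1 ≠ pr.2).image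
        (fun pr => |r pr.1 - r pr.2|) with hD
      have hne : D.Nonempty :=
        ⟨|r i0 - r j0|, Finset.mem_image.mpr ⟨(i0, j0), by simp [hij0], rfl⟩⟩
      refine ⟨D.min' hne, ?_, fun i j hij =>
        Finset.min'_le _ _ (Finset.mem_image.mpr ⟨(i, j), by simp [hij], rfl⟩)⟩
      obtain ⟨v, hv, hveq⟩ := Finset.mem_image.mp (D.min'_mem hne)
      rw [← hveq]
      simp only [Finset.mem_filter] at hv
      exact abs_pos.mpr (sub_ne_zero.mpr fun h => hv.2 (hr h))
  -- per-root radius with one-signed derivative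
  have hδ : ∀ i, ∃ δ > (0:ℝ), δ < d / 2 ∧
      ((∀ x ∈ Icc (r i - δ) (r i + δ), 0 < p.derivative.eval x) ∨
       (∀ x ∈ Icc (r i - δ) (r i + δ), p.derivative.eval x < 0)) := by
    intro i
    have hc : ContinuousAt (fun x => p.derivative.eval x) (r i) :=
      p.derivative.continuous.continuousAt
    have hne := hder i
    obtain ⟨δ1, hδ1, hball⟩ := Metric.continuousAt_iff.mp hc |p.derivative.eval (r i)|
      (abs_pos.mpr hne)
    refine ⟨min (δ1 / 2) (d / 4), by positivity, ?_, ?_⟩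
    · calc min (δ1 / 2) (d / 4) ≤ d / 4 := min_le_right _ _
        _ < d / 2 := by linarith
    · have hsmall : ∀ x ∈ Icc (r i - min (δ1 / 2) (d / 4)) (r i + min (δ1 / 2) (d / 4)),
          |p.derivative.eval x - p.derivative.eval (r i)| < |p.derivative.eval (r i)| := by
        intro x hx
        have : dist x (r i) < δ1 := by
          rw [Real.dist_eq, abs_sub_lt_iff]
          have h1 := hx.1; have h2 := hx.2
          have h3 := min_le_left (δ1 / 2) (d / 4)
          constructor <;> linarith
        have := hball this
        rwa [Real.dist_eq] at this
      rcases hne.lt_or_gt with hneg | hpos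
      · right; intro x hx
        have := hsmall x hx
        rw [abs_sub_lt_iff] at this
        have h2 := this.1
        rw [abs_of_neg hneg] at h2
        linarith
      · left; intro x hx
        have := hsmall x hx
        rw [abs_sub_lt_iff] at this
        have h1 := this.2
        rw [abs_of_pos hpos] at h1
        linarith
  choose δf hδ0 hδd hsign using hδ
  -- uniform radius
  set S : Finset ℝ := insert 1 (Finset.univ.image δf) with hS
  have hSne : S.Nonempty := ⟨1, Finset.mem_insert_self _ _⟩
  set δ₀ := S.min' hSne with hδ₀def
  have hδ₀pos : 0 < δ₀ := by
    have hmem := S.min'_mem hSne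
    rcases Finset.mem_insert.mp hmem with h | h
    · rw [hδ₀def, h]; exact one_pos
    · obtain ⟨i, -, h⟩ := Finset.mem_image.mp h
      rw [hδ₀def, ← h]; exact hδ0 i
  have hδ₀le : ∀ i, δ₀ ≤ δf i := fun i =>
    Finset.min'_le _ _ (Finset.mem_insert_of_mem (Finset.mem_image_of_mem _ (Finset.mem_univ i)))
  have hδ₀d : ∀ i, δ₀ < d / 2 := fun i => lt_of_le_of_lt (hδ₀le i) (hδd i)
  -- strict monotonicity on the big intervals
  have hmono : ∀ i, StrictMonoOn (fun x => p.eval x) (Icc (r i - δf i) (r i + δf i)) ∨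
      StrictAntiOn (fun x => p.eval x) (Icc (r i - δf i) (r i + δf i)) := by
    intro i
    rcases hsign i with h | h
    · left
      refine strictMonoOn_of_deriv_pos (convex_Icc _ _) hFc.continuousOn fun x hx => ?_
      rw [Polynomial.deriv]
      exact h x (Ioo_subset_Icc_self (by rwa [interior_Icc] at hx))
    · right
      refine strictAntiOn_of_deriv_neg (convex_Icc _ _) hFc.continuousOn fun x hx => ?_
      rw [Polynomial.deriv]
      exact h x (Ioo_subset_Icc_self (by rwa [interior_Icc] at hx))
  have hri0 : ∀ i, p.eval (r i) = 0 := fun i => (hroot (r i)).mpr ⟨i, rfl⟩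
  -- existence and uniqueness of perturbed root in each small interval
  have hiv : ∀ i, (0 < min |p.eval (r i - δ₀)| |p.eval (r i + δ₀)|) ∧
      ∀ y : ℝ, |y| < min |p.eval (r i - δ₀)| |p.eval (r i + δ₀)| →
        ∃! x, x ∈ Icc (r i - δ₀) (r i + δ₀) ∧ p.eval x = y := by
    intro i
    have hle := hδ₀le i
    have hmem_l : r i - δ₀ ∈ Icc (r i - δf i) (r i + δf i) :=
      ⟨by linarith, by linarith [hδ₀pos, hδ0 i]⟩
    have hmem_r : r i + δ₀ ∈ Icc (r i - δf i) (r i + δf i) :=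
      ⟨by linarith [hδ₀pos, hδ0 i], by linarith⟩
    have hmem_c : r i ∈ Icc (r i - δf i) (r i + δf i) :=
      ⟨by linarith [hδ0 i], by linarith [hδ0 i]⟩
    have hsub : Icc (r i - δ₀) (r i + δ₀) ⊆ Icc (r i - δf i) (r i + δf i) := by
      intro x hx
      exact ⟨by linarith [hx.1], by linarith [hx.2]⟩
    have hlu : r i - δ₀ ≤ r i + δ₀ := by linarith
    rcases hmono i with h | h
    · have hl : p.eval (r i - δ₀) < 0 := by
        have := h hmem_l hmem_c (by linarith); simpa [hri0 i] using this
      have hu : 0 < p.eval (r i + δ₀) := by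
        have := h hmem_c hmem_r (by linarith); simpa [hri0 i] using this
      refine ⟨lt_min (abs_pos.mpr hl.ne) (abs_pos.mpr hu.ne'), fun y hy => ?_⟩
      rw [lt_min_iff, abs_of_neg hl, abs_of_pos hu, abs_lt, abs_lt] at hy
      have hyIcc : y ∈ Icc (p.eval (r i - δ₀)) (p.eval (r i + δ₀)) :=
        ⟨by linarith [hy.1.1], by linarith [hy.2.2]⟩
      obtain ⟨x, hxmem, hxy⟩ := intermediate_value_Icc hlu hFc.continuousOn hyIcc
      refine ⟨x, ⟨hxmem, hxy⟩, ?_⟩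
      rintro x' ⟨hx'mem, hx'y⟩
      exact h.injOn (hsub hx'mem) (hsub hxmem) (hx'y.trans hxy.symm)
    · have hl : 0 < p.eval (r i - δ₀) := by
        have := h hmem_l hmem_c (by linarith); simpa [hri0 i] using this
      have hu : p.eval (r i + δ₀) < 0 := by
        have := h hmem_c hmem_r (by linarith); simpa [hri0 i] using this
      refine ⟨lt_min (abs_pos.mpr hl.ne') (abs_pos.mpr hu.ne), fun y hy => ?_⟩
      rw [lt_min_iff, abs_of_pos hl, abs_of_neg hu, abs_lt, abs_lt] at hy
      have hyIcc : y ∈ Icc (p.eval (r i + δ₀)) (p.eval (r i - δ₀)) :=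
        ⟨by linarith [hy.2.1], by linarith [hy.1.2]⟩
      obtain ⟨x, hxmem, hxy⟩ := intermediate_value_Icc' hlu hFc.continuousOn hyIcc
      refine ⟨x, ⟨hxmem, hxy⟩, ?_⟩
      rintro x' ⟨hx'mem, hx'y⟩
      exact h.injOn (hsub hx'mem) (hsub hxmem) (hx'y.trans hxy.symm)
  -- large |x| : |p| ≥ 1
  obtain ⟨R1, hR1⟩ := eventually_atTop.mp ((p.abs_tendsto_atTop hdeg).eventually_ge_atTop 1)
  obtain ⟨R2, hR2⟩ := eventually_atBot.mp ((abs_tendsto_atBot_key p hdeg).eventually_ge_atTop 1)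
  set R := max R1 (-R2) with hRdef
  -- compact region away from roots
  set K := Icc (-R) R \ ⋃ i, Ioo (r i - δ₀) (r i + δ₀) with hKdef
  have hKcomp : IsCompact K := isCompact_Icc.diff (isOpen_iUnion fun i => isOpen_Ioo)
  obtain ⟨c, hc0, hcK⟩ : ∃ c > (0:ℝ), ∀ x ∈ K, c ≤ |p.eval x| := by
    rcases K.eq_empty_or_nonempty with hKe | hKne
    · exact ⟨1, one_pos, fun x hx => by rw [hKe] at hx; exact absurd hx (notMem_empty x)⟩
    · obtain ⟨x₀, hx₀K, hx₀min⟩ := hKcomp.exists_isMinOn hKne hFc.abs.continuousOn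
      refine ⟨|p.eval x₀|, ?_, fun x hx => isMinOn_iff.mp hx₀min x hx⟩
      rw [gt_iff_lt, abs_pos]
      intro h0
      obtain ⟨i, rfl⟩ := (hroot x₀).mp h0
      exact hx₀K.2 (mem_iUnion.mpr ⟨i, ⟨by linarith [hδ₀pos], by linarith [hδ₀pos]⟩⟩)
  set E : Finset ℝ :=
    insert 1 (Finset.univ.image fun i => min |p.eval (r i - δ₀)| |p.eval (r i + δ₀)|) with hE
  have hEne : E.Nonempty := ⟨1, Finset.mem_insert_self _ _⟩
  refine ⟨min c (E.min' hEne), ?_, ?_⟩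
  · apply lt_min hc0
    have hmem := E.min'_mem hEne
    rcases Finset.mem_insert.mp hmem with h | h
    · exact h ▸ one_pos
    · obtain ⟨i, -, h⟩ := Finset.mem_image.mp h
      exact h ▸ (hiv i).1
  · intro a ha
    have hac : |a| < c := lt_of_lt_of_le ha (min_le_left _ _)
    have ha1 : |a| < 1 := lt_of_lt_of_le ha
      ((min_le_right _ _).trans (E.min'_le 1 (Finset.mem_insert_self _ _)))
    have hai : ∀ i, |a| < min |p.eval (r i - δ₀)| |p.eval (r i + δ₀)| := fun i =>
      lt_of_lt_of_le ha ((min_le_right _ _).trans (E.min'_le _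
        (Finset.mem_insert_of_mem (Finset.mem_image_of_mem _ (Finset.mem_univ i)))))
    have hexu := fun i => (hiv i).2 (-a) (by rw [abs_neg]; exact hai i)
    choose xf hxf hxfu using hexu
    have hxinj : Function.Injective xf := by
      intro i j hij
      by_contra hne
      have h1 := (hxf i).1
      have h2 := (hxf j).1
      rw [hij] at h1
      have hgap := hdle i j hne
      have hij2 : |r i - r j| < d := by
        rw [abs_sub_lt_iff]
        have := hδ₀d i
        constructor <;> [linarith [h1.1, h2.2]; linarith [h1.2, h2.1]]
      linarith
    have hset : {x : ℝ | p.eval x + a = 0} = Set.range xf := by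
      ext x
      simp only [mem_setOf_eq, mem_range]
      constructor
      · intro hx
        have hFx : p.eval x = -a := by linarith
        by_cases hxI : ∃ i, x ∈ Icc (r i - δ₀) (r i + δ₀)
        · obtain ⟨i, hxi⟩ := hxI
          exact ⟨i, (hxfu i x ⟨hxi, hFx⟩).symm⟩
        · exfalso
          push_neg at hxI
          have hxabs : |p.eval x| = |a| := by rw [hFx, abs_neg]
          by_cases hxR : x ∈ Icc (-R) R
          · have hxK : x ∈ K := ⟨hxR, fun hmem => by
              obtain ⟨i, hi⟩ := mem_iUnion.mp hmem
              exact hxI i (Ioo_subset_Icc_self hi)⟩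
            have := hcK x hxK
            rw [hxabs] at this
            linarith
          · rw [mem_Icc, not_and_or, not_le, not_le] at hxR
            have h1le : (1:ℝ) ≤ |p.eval x| := by
              rcases hxR with h | h
              · refine hR2 x ?_
                have : -R ≤ R2 := by
                  rw [neg_le]
                  exact le_max_right R1 (-R2)
                linarith
              · exact hR1 x ((le_max_left R1 (-R2)).trans h.le)
            rw [hxabs] at h1le
            linarith
      · rintro ⟨i, rfl⟩
        have := (hxf i).2
        linarith
    rw [hset, ← Set.image_univ, Set.ncard_image_of_injective _ hxinj, Set.ncard_univ]
    simp



/-- Let `f = (X² + k) ∏ (X - kᵢ)` with `k, k₁, …, k_{n-2}` positive even integers and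
the `kᵢ` pairwise distinct.  Then there is `ε > 0` such that for any real `a` with
`|a| < ε`, the polynomial `f + a` has exactly `n - 2` distinct real roots. -/
theorem stmt_6 (n : ℕ) (hn : 2 ≤ n) (k : ℤ) (hk : 0 < k) (hke : Even k)
    (ki : Fin (n - 2) → ℤ) (hki : ∀ i, 0 < ki i) (hkie : ∀ i, Even (ki i))
    (hinj : Function.Injective ki) :
    ∃ ε > (0 : ℝ), ∀ a : ℝ, |a| < ε →
      Set.ncard {x : ℝ | Polynomial.eval x
        ((Polynomial.X ^ 2 + Polynomial.C (k : ℝ)) *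
          ∏ i : Fin (n - 2), (Polynomial.X - Polynomial.C ((ki i : ℝ)))) + a = 0} =
        n - 2 := by
  set r : Fin (n - 2) → ℝ := fun i => (ki i : ℝ) with hrdef
  set p : ℝ[X] := (X ^ 2 + C (k : ℝ)) * ∏ i : Fin (n - 2), (X - C (r i)) with hp
  have hkr : (0 : ℝ) < (k : ℝ) := by exact_mod_cast hk
  have hrinj : Function.Injective r := fun i j h => hinj (Int.cast_injective h)
  have hq2 : (∏ i : Fin (n - 2), (X - C (r i)) : ℝ[X]).Monic :=
    monic_prod_of_monic _ _ fun i _ => monic_X_sub_C _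
  have hq1 : ((X : ℝ[X]) ^ 2 + C (k : ℝ)) ≠ 0 := by
    intro h
    have := natDegree_X_pow_add_C (n := 2) (r := (k : ℝ))
    rw [h] at this
    simp at this
  have hdeg : 0 < p.degree := by
    rw [← natDegree_pos_iff_degree_pos, hp, natDegree_mul hq1 hq2.ne_zero,
      natDegree_X_pow_add_C]
    omega
  have hpos : ∀ x : ℝ, 0 < x ^ 2 + (k : ℝ) := fun x => by positivity
  have heval : ∀ x : ℝ, p.eval x = (x ^ 2 + k) * ∏ i, (x - r i) := by
    intro x; simp [hp, eval_prod]
  have hroot : ∀ x : ℝ, p.eval x = 0 ↔ ∃ i, x = r i := by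
    intro x
    rw [heval, mul_eq_zero]
    constructor
    · rintro (h | h)
      · exact absurd h (hpos x).ne'
      · obtain ⟨i, -, hi⟩ := Finset.prod_eq_zero_iff.mp h
        exact ⟨i, sub_eq_zero.mp hi⟩
    · rintro ⟨i, rfl⟩
      exact Or.inr (Finset.prod_eq_zero (Finset.mem_univ i) (sub_self _))
  have hder : ∀ i, p.derivative.eval (r i) ≠ 0 := by
    intro i
    have hfac : (X - C (r i)) *
        ((X ^ 2 + C (k : ℝ)) * ∏ j ∈ Finset.univ.erase i, (X - C (r j))) = p := by
      rw [hp, mul_left_comm]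
      congr 1
      exact Finset.mul_prod_erase Finset.univ (fun j => X - C (r j)) (Finset.mem_univ i)
    have hz : ∀ q : ℝ[X], eval (r i) ((X - C (r i)) * q) = 0 := by intro q; simp
    rw [← hfac, derivative_mul, derivative_X_sub_C, one_mul, eval_add, hz, add_zero]
    have heq : (((X : ℝ[X]) ^ 2 + C (k : ℝ)) * ∏ j ∈ Finset.univ.erase i,
        (X - C (r j))).eval (r i)
        = ((r i) ^ 2 + k) * ∏ j ∈ Finset.univ.erase i, (r i - r j) := by
      simp [eval_prod]
    rw [heq]
    apply mul_ne_zero (hpos (r i)).ne'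
    rw [Finset.prod_ne_zero_iff]
    intro j hj
    exact sub_ne_zero.mpr fun h => (Finset.mem_erase.mp hj).1 (hrinj h.symm)
  exact key (n - 2) p hdeg r hrinj hroot hder
end

section
/- Let l ≥ 1 be an integer and let f = ∏_{i=0}^{l} (1 + X^{2i+1}) ∈ ℤ[X], a polynomial of degree (l+1)². Then the coefficient of X² in f and the coefficient of X^{(l+1)² − 2} in f are both zero, while for every natural number n with 0 ≤ n ≤ (l+1)² and n ≠ 2 and n ≠ (l+1)² − 2, the coefficient of Xⁿ in f is nonzero. -/
open Polynomial Finset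

lemma stmt8_expand (s : Finset ℕ) :
    (∏ i ∈ s, (1 + (X : Polynomial ℤ) ^ (2*i+1)))
      = ∑ t ∈ s.powerset, X ^ (∑ i ∈ t, (2*i+1)) := by
  simp_rw [add_comm (1 : Polynomial ℤ)]
  rw [Finset.prod_add]
  refine Finset.sum_congr rfl fun t ht => ?_
  simp [Finset.prod_pow_eq_pow_sum]

lemma stmt8_coeff_count (s : Finset ℕ) (n : ℕ) :
    (∏ i ∈ s, (1 + (X : Polynomial ℤ) ^ (2*i+1))).coeff n
      = ((s.powerset.filter (fun t => ∑ i ∈ t, (2*i+1) = n)).card : ℤ) := by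
  rw [stmt8_expand, Polynomial.finset_sum_coeff]
  simp_rw [Polynomial.coeff_X_pow]
  rw [Finset.card_filter]
  push_cast
  exact Finset.sum_congr rfl fun t ht => by simp [eq_comm]

lemma stmt8_sum_odds (k : ℕ) : ∑ i ∈ Finset.range k, (2*i+1) = k^2 := by
  induction k with
  | zero => simp
  | succ k ih => rw [Finset.sum_range_succ, ih]; ring

lemma stmt8_no_sum_two (t : Finset ℕ) : ∑ i ∈ t, (2*i+1) ≠ 2 := by
  intro h
  have hc : ∑ i ∈ t, (2*i+1) = 2 * ∑ i ∈ t, i + t.card := by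
    rw [Finset.sum_add_distrib, Finset.mul_sum]; simp
  rw [hc] at h
  have hcard : t.card = 0 ∨ t.card = 2 := by omega
  rcases hcard with hcard | hcard
  · rw [Finset.card_eq_zero] at hcard; subst hcard; simp at h
  · obtain ⟨a, b, hab, rfl⟩ := Finset.card_eq_two.mp hcard
    rw [Finset.sum_pair hab] at h
    omega

lemma stmt8_exists_rep : ∀ l : ℕ, 1 ≤ l → ∀ n : ℕ, n ≤ (l+1)^2 → n ≠ 2 → n ≠ (l+1)^2 - 2 →
    ∃ t ⊆ Finset.range (l+1), ∑ i ∈ t, (2*i+1) = n := by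
  intro l hl
  induction l, hl using Nat.le_induction with
  | base =>
    intro n h1 h2 h3
    norm_num at h1 h3
    interval_cases n
    · exact ⟨∅, by simp, by simp⟩
    · exact ⟨{0}, by decide, by decide⟩
    · exact absurd rfl h2
    · exact ⟨{1}, by decide, by decide⟩
    · exact ⟨{0, 1}, by decide, by decide⟩
  | succ l hl IH =>
    intro n hn1 hn2 hn3
    obtain ⟨k, hk1, hk2, hk3, hke1, hke2⟩ :
        ∃ k, 1 ≤ k ∧ (2 ≤ l → 4 ≤ k) ∧ k ≠ 6 ∧ (l+1)^2 = k+2*l+1 ∧ (l+2)^2 = k+4*l+4 := by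
      refine ⟨l*l, Nat.one_le_iff_ne_zero.mpr (by positivity), fun h => by nlinarith, ?_, by ring, by ring⟩
      intro h
      rcases le_or_gt l 2 with h' | h'
      · nlinarith
      · nlinarith
    rw [hke2] at hn1 hn3
    rcases le_or_gt n ((l+1)^2) with hA | hB
    · by_cases hn : n = (l+1)^2 - 2
      · have hl2 : 2 ≤ l := by
          by_contra h
          have hl1 : l = 1 := by omega
          subst hl1
          norm_num at hn
          exact hn2 hn
        have hk4 := hk2 hl2
        rw [hke1] at hn hA
        obtain ⟨t, hts, ht⟩ := IH (k - 4) (by rw [hke1]; omega) (by omega) (by rw [hke1]; omega)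
        have hnotmem : l + 1 ∉ t := fun h => by
          have := hts h; rw [Finset.mem_range] at this; omega
        refine ⟨insert (l+1) t, ?_, ?_⟩
        · rw [Finset.insert_subset_iff]
          exact ⟨Finset.mem_range.mpr (by omega),
            hts.trans (Finset.range_subset_range.mpr (by omega))⟩
        · rw [Finset.sum_insert hnotmem, ht]; omega
      · obtain ⟨t, hts, ht⟩ := IH n hA hn2 hn
        exact ⟨t, hts.trans (Finset.range_subset_range.mpr (by omega)), ht⟩
    · rw [hke1] at hB
      have h2l3 : 2*l+3 ≤ n := by omega
      set m := n - (2*l+3) with hm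
      have hm1 : m ≤ (l+1)^2 := by rw [hke1]; omega
      have hm2 : m ≠ 2 := by
        intro h
        have hn' : n = 2*l+5 := by omega
        have hlt : k < 4 := by omega
        have hl1 : l = 1 := by
          rcases le_or_gt 2 l with h' | h'
          · exact absurd (hk2 h') (by omega)
          · omega
        subst hl1
        omega
      have hm3 : m ≠ (l+1)^2 - 2 := by rw [hke1]; omega
      obtain ⟨t, hts, ht⟩ := IH m hm1 hm2 hm3
      have hnotmem : l + 1 ∉ t := fun h => by
        have := hts h; rw [Finset.mem_range] at this; omega
      refine ⟨insert (l+1) t, ?_, ?_⟩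
      · rw [Finset.insert_subset_iff]
        exact ⟨Finset.mem_range.mpr (by omega),
          hts.trans (Finset.range_subset_range.mpr (by omega))⟩
      · rw [Finset.sum_insert hnotmem, ht]; omega

/-- For `f = (1+X)(1+X³)⋯(1+X^{2l+1})` with `l ≥ 1`, the coefficients of `X²` and
`X^{(l+1)² - 2}` vanish, and all other coefficients of `Xⁿ` for `0 ≤ n ≤ (l+1)²`
are nonzero. -/
theorem stmt_8 (l : ℕ) (hl : 1 ≤ l) :
    (∏ i ∈ Finset.range (l + 1),
        (1 + (Polynomial.X : Polynomial ℤ) ^ (2 * i + 1))).coeff 2 = 0 ∧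
    (∏ i ∈ Finset.range (l + 1),
        (1 + (Polynomial.X : Polynomial ℤ) ^ (2 * i + 1))).coeff ((l + 1) ^ 2 - 2) = 0 ∧
    ∀ n : ℕ, n ≤ (l + 1) ^ 2 → n ≠ 2 → n ≠ (l + 1) ^ 2 - 2 →
      (∏ i ∈ Finset.range (l + 1),
        (1 + (Polynomial.X : Polynomial ℤ) ^ (2 * i + 1))).coeff n ≠ 0 := by
  have hN4 : 4 ≤ (l+1)^2 := by
    calc 4 = 2^2 := by norm_num
    _ ≤ (l+1)^2 := Nat.pow_le_pow_left (by omega) 2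
  refine ⟨?_, ?_, ?_⟩
  · rw [stmt8_coeff_count]
    norm_cast
    rw [Finset.card_eq_zero, Finset.filter_eq_empty_iff]
    exact fun t _ => stmt8_no_sum_two t
  · rw [stmt8_coeff_count]
    norm_cast
    rw [Finset.card_eq_zero, Finset.filter_eq_empty_iff]
    intro t ht hsum
    rw [Finset.mem_powerset] at ht
    have hsd : ∑ i ∈ Finset.range (l+1) \ t, (2*i+1) + ∑ i ∈ t, (2*i+1)
        = ∑ i ∈ Finset.range (l+1), (2*i+1) := Finset.sum_sdiff ht
    rw [stmt8_sum_odds, hsum] at hsd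
    have h2 : ∑ i ∈ Finset.range (l+1) \ t, (2*i+1) = 2 := by omega
    exact stmt8_no_sum_two _ h2
  · intro n hn1 hn2 hn3
    rw [stmt8_coeff_count]
    obtain ⟨t, hts, ht⟩ := stmt8_exists_rep l hl n hn1 hn2 hn3
    have hmem : t ∈ (Finset.range (l+1)).powerset.filter
        (fun t => ∑ i ∈ t, (2*i+1) = n) :=
      Finset.mem_filter.mpr ⟨Finset.mem_powerset.mpr hts, ht⟩
    have hpos : 0 < ((Finset.range (l+1)).powerset.filter
        (fun t => ∑ i ∈ t, (2*i+1) = n)).card := Finset.card_pos.mpr ⟨t, hmem⟩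
    exact_mod_cast hpos.ne'
end

section
/- For every integer n ≥ 6, the coefficient of X^{2n−3} in the polynomial (1 + X) · ∏_{i=1}^{n−1} (1 + X^{4i−1}) ∈ ℤ[X] is nonzero if and only if n ∉ {6, 8, 10}. -/
open Polynomial Finset
set_option maxRecDepth 100000

private def ee (i : ℕ) : ℕ := if i = 0 then 1 else 4 * i - 1

private lemma coeff_eq (n m : ℕ) (hn : 1 ≤ n) :
    (((1 + Polynomial.X) * ∏ i ∈ Finset.Icc 1 (n - 1),
        (1 + Polynomial.X ^ (4 * i - 1)) : Polynomial ℤ)).coeff m =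
      (((Icc 0 (n - 1)).powerset.filter (fun t => ∑ i ∈ t, ee i = m)).card : ℤ) := by
  have h1 : (Icc 0 (n-1) : Finset ℕ) = insert 0 (Icc 1 (n-1)) := by
    ext x; simp; omega
  have h2 : ((1 + Polynomial.X) * ∏ i ∈ Finset.Icc 1 (n - 1),
        (1 + Polynomial.X ^ (4 * i - 1)) : Polynomial ℤ) =
      ∏ i ∈ Icc 0 (n - 1), (Polynomial.X ^ ee i + 1) := by
    rw [h1, Finset.prod_insert (by simp)]
    have : (Polynomial.X ^ ee 0 + 1 : Polynomial ℤ) = 1 + Polynomial.X := by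
      simp [ee]; ring
    rw [this]
    congr 1
    apply Finset.prod_congr rfl
    intro i hi
    have : i ≠ 0 := by simp at hi; omega
    simp [ee, this]; ring
  rw [h2, Finset.prod_add]
  simp only [Finset.prod_const_one, mul_one, Finset.prod_pow_eq_pow_sum,
    Polynomial.finset_sum_coeff, Polynomial.coeff_X_pow]
  rw [Finset.card_filter]
  push_cast
  exact Finset.sum_congr rfl (fun t ht => by simp [eq_comm])

private lemma no6 : ((Icc 0 5 : Finset ℕ).powerset.filter (fun t => ∑ i ∈ t, ee i = 9)).card = 0 := by
  decide

private lemma no8 : ((Icc 0 7 : Finset ℕ).powerset.filter (fun t => ∑ i ∈ t, ee i = 13)).card = 0 := by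
  decide

private lemma no10 : ((Icc 0 9 : Finset ℕ).powerset.filter (fun t => ∑ i ∈ t, ee i = 17)).card = 0 := by
  decide

/-- For `n ≥ 6`, the coefficient of `X^{2n-3}` in
`(1+X)(1+X³)(1+X⁷)⋯(1+X^{4n-5})` is nonzero iff `n ∉ {6, 8, 10}`. -/
theorem stmt_9 (n : ℕ) (hn : 6 ≤ n) :
    (((1 + Polynomial.X) * ∏ i ∈ Finset.Icc 1 (n - 1),
        (1 + Polynomial.X ^ (4 * i - 1)) : Polynomial ℤ).coeff (2 * n - 3) ≠ 0) ↔
      n ∉ ({6, 8, 10} : Set ℕ) := by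
  rw [coeff_eq n (2 * n - 3) (by omega)]
  have key : (((Icc 0 (n-1)).powerset.filter (fun t => ∑ i ∈ t, ee i = 2*n-3)).card : ℤ) ≠ 0 ↔
      ∃ t ⊆ Icc 0 (n-1), ∑ i ∈ t, ee i = 2*n-3 := by
    rw [Ne, Int.natCast_eq_zero, ← Ne, Finset.card_ne_zero, Finset.filter_nonempty_iff]
    simp [Finset.mem_powerset]
  rw [key]
  constructor
  · rintro ⟨t, hts, hsum⟩ hmem
    simp only [Set.mem_insert_iff, Set.mem_singleton_iff] at hmem
    rcases hmem with rfl | rfl | rfl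
    · exact (Finset.eq_empty_iff_forall_notMem.mp (Finset.card_eq_zero.mp no6) t
        (Finset.mem_filter.mpr ⟨Finset.mem_powerset.mpr hts, hsum⟩))
    · exact (Finset.eq_empty_iff_forall_notMem.mp (Finset.card_eq_zero.mp no8) t
        (Finset.mem_filter.mpr ⟨Finset.mem_powerset.mpr hts, hsum⟩))
    · exact (Finset.eq_empty_iff_forall_notMem.mp (Finset.card_eq_zero.mp no10) t
        (Finset.mem_filter.mpr ⟨Finset.mem_powerset.mpr hts, hsum⟩))
  · intro hmem
    simp only [Set.mem_insert_iff, Set.mem_singleton_iff, not_or] at hmem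
    rcases Nat.even_or_odd n with he | ho
    · obtain ⟨m, rfl⟩ := he
      have hm : 6 ≤ m := by omega
      refine ⟨{1, 2, m - 3}, ?_, ?_⟩
      · intro x hx
        simp only [Finset.mem_insert, Finset.mem_singleton] at hx
        simp only [Finset.mem_Icc]
        omega
      · rw [Finset.sum_insert (by simp; omega), Finset.sum_insert (by simp; omega),
          Finset.sum_singleton]
        have h3 : m - 3 ≠ 0 := by omega
        simp only [ee, if_neg h3]
        norm_num
        omega
    · obtain ⟨m, rfl⟩ := ho
      refine ⟨{m}, ?_, ?_⟩
      · simp only [Finset.singleton_subset_iff, Finset.mem_Icc]; omega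
      · rw [Finset.sum_singleton]
        have : m ≠ 0 := by omega
        simp only [ee, this, if_false]
        omega
end
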